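/- Sequential inverse-propensity-weighting identity: E[(∏_{j=0}^{n} 1_{A_j}/π_j)·Y | 𝒢_0] = μ_0 P-almost surely; i.e., the inverse-propensity-weighted outcome is conditionally unbiased, given the initial history, for the conditional average potential outcome defined by the recursive response functions. -/

import Mathlib

open MeasureTheory Finset

/-- **Sequential inverse-propensity-weighting identity.**
With a filtration `𝒢`, treatment events `A_j ∈ 𝒢_{j+1}`, propensities
`π_j = E[1_{A_j} | 𝒢_j]` with `ε ≤ π_j ≤ 1` a.s., a bounded outcome `Y`, and bounded
`𝒢_j`-measurable response functions `μ_j` defined recursively by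
`E[1_{A_n}·Y | 𝒢_n] = π_n·μ_n` and `E[1_{A_j}·μ_{j+1} | 𝒢_j] = π_j·μ_j`, one has
`E[(∏_{j=0}^{n} 1_{A_j}/π_j)·Y | 𝒢_0] = μ_0` P-almost surely: the inverse-propensity-
weighted outcome is conditionally unbiased, given the initial history, for the conditional
average potential outcome. -/
theorem sequential_IPW_identity
    {Ω : Type*} {F : MeasurableSpace Ω} {P : Measure Ω} [IsProbabilityMeasure P]
    (n : ℕ) (G : ℕ → MeasurableSpace Ω) (hG_mono : Monotone G) (hG_le : ∀ j, G j ≤ F)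
    (A : ℕ → Set Ω) (hA : ∀ j ≤ n, MeasurableSet[G (j + 1)] (A j))
    (π : ℕ → Ω → ℝ) (hπ_meas : ∀ j ≤ n, Measurable[G j] (π j))
    (ε : ℝ) (hε : 0 < ε) (hπ_bd : ∀ j ≤ n, ∀ᵐ x ∂P, ε ≤ π j x ∧ π j x ≤ 1)
    (hπ_ce : ∀ j ≤ n, π j =ᵐ[P] P[(A j).indicator (fun _ => (1 : ℝ)) | G j])
    (Y : Ω → ℝ) (hY_meas : Measurable Y) (CY : ℝ) (hY_bd : ∀ x, |Y x| ≤ CY)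
    (μ : ℕ → Ω → ℝ) (hμ_meas : ∀ j ≤ n, Measurable[G j] (μ j))
    (Cμ : ℝ) (hμ_bd : ∀ j ≤ n, ∀ x, |μ j x| ≤ Cμ)
    (hμ_n : P[fun x => (A n).indicator (fun _ => (1 : ℝ)) x * Y x | G n]
        =ᵐ[P] fun x => π n x * μ n x)
    (hμ_rec : ∀ j < n,
        P[fun x => (A j).indicator (fun _ => (1 : ℝ)) x * μ (j + 1) x | G j]
          =ᵐ[P] fun x => π j x * μ j x) :
    P[fun x => (∏ j ∈ range (n + 1), (A j).indicator (fun _ => (1 : ℝ)) x / π j x) * Y x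
        | G 0] =ᵐ[P] μ 0 := by
  classical
  -- abbreviations
  set ind : ℕ → Ω → ℝ := fun j => (A j).indicator (fun _ => (1 : ℝ)) with hind
  set W : ℕ → Ω → ℝ := fun k x => ∏ j ∈ Ico k (n+1), ind j x / π j x with hWdef
  -- basic facts
  obtain ⟨x0, hx0⟩ := (hπ_bd 0 (Nat.zero_le n)).exists
  have hε1 : ε ≤ 1 := hx0.1.trans hx0.2
  have hCY0 : 0 ≤ CY := (abs_nonneg _).trans (hY_bd x0)
  have hCμ0 : 0 ≤ Cμ := (abs_nonneg _).trans (hμ_bd 0 (Nat.zero_le n) x0)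
  have hεinv : (1:ℝ) ≤ ε⁻¹ := by rw [one_le_inv_iff₀]; exact ⟨hε, hε1⟩
  set B : ℝ := ε⁻¹ ^ (n+1) with hBdef
  have hB1 : (1:ℝ) ≤ B := by
    calc (1:ℝ) = 1 ^ (n+1) := (one_pow _).symm
      _ ≤ ε⁻¹ ^ (n+1) := pow_le_pow_left₀ zero_le_one hεinv _
  have hind_abs : ∀ j x, |ind j x| ≤ 1 := by
    intro j x
    by_cases h : x ∈ A j <;>
      simp [hind, Set.indicator_of_mem, Set.indicator_of_notMem, h]
  -- measurability
  have hindF : ∀ j ≤ n, Measurable (ind j) := fun j hj =>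
    (measurable_const.indicator ((hG_le (j+1)) _ (hA j hj)))
  have hπF : ∀ j ≤ n, Measurable (π j) := fun j hj =>
    (hπ_meas j hj).mono (hG_le j) le_rfl
  have hμF : ∀ j ≤ n, Measurable (μ j) := fun j hj =>
    (hμ_meas j hj).mono (hG_le j) le_rfl
  have hWF : ∀ k, Measurable (W k) := by
    intro k
    simp only [hWdef]
    apply Finset.measurable_prod
    intro j hj
    have hjn : j ≤ n := by simp only [Finset.mem_Ico] at hj; omega
    exact (hindF j hjn).div (hπF j hjn)
  -- integrability helper
  have hInt : ∀ (f : Ω → ℝ) (C : ℝ), Measurable f → (∀ᵐ x ∂P, |f x| ≤ C) →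
      Integrable f P := fun f C hm hb =>
    Integrable.mono' (integrable_const C) hm.aestronglyMeasurable
      (hb.mono fun x hx => by simpa [Real.norm_eq_abs] using hx)
  -- a.e. bounds, all j at once
  have hbd_all : ∀ᵐ x ∂P, ∀ j, j ≤ n → ε ≤ π j x ∧ π j x ≤ 1 := by
    rw [ae_all_iff]
    intro j
    by_cases hj : j ≤ n
    · exact (hπ_bd j hj).mono fun x hx _ => hx
    · filter_upwards with x h; exact absurd h hj
  have hW_bd : ∀ k, ∀ᵐ x ∂P, |W k x| ≤ B := by
    intro k
    filter_upwards [hbd_all] with x hx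
    have h1 : |W k x| = ∏ j ∈ Ico k (n+1), |ind j x / π j x| := by
      simp only [hWdef]; exact Finset.abs_prod _ _
    rw [h1]
    have h2 : ∏ j ∈ Ico k (n+1), |ind j x / π j x| ≤ ∏ _j ∈ Ico k (n+1), ε⁻¹ := by
      apply Finset.prod_le_prod (fun j _ => abs_nonneg _)
      intro j hj
      have hjn : j ≤ n := by simp only [Finset.mem_Ico] at hj; omega
      have hπx := hx j hjn
      rw [abs_div]
      calc |ind j x| / |π j x| ≤ 1 / ε := by
            apply div_le_div₀ zero_le_one (hind_abs j x) hε
            rw [abs_of_pos (lt_of_lt_of_le hε hπx.1)]; exact hπx.1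
        _ = ε⁻¹ := one_div ε
    refine h2.trans ?_
    rw [Finset.prod_const, Nat.card_Ico]
    exact pow_le_pow_right₀ hεinv (by omega)
  have hWY_int : ∀ k, Integrable (fun x => W k x * Y x) P := by
    intro k
    apply hInt _ (B * CY) ((hWF k).mul hY_meas)
    filter_upwards [hW_bd k] with x hx
    rw [Pi.mul_apply, abs_mul]
    exact mul_le_mul hx (hY_bd x) (abs_nonneg _) (le_trans zero_le_one hB1)
  -- the key backward induction
  have key : ∀ d k, k + d = n → P[fun x => W k x * Y x | G k] =ᵐ[P] μ k := by
    intro d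
    induction d with
    | zero =>
      intro k hk
      have hkn : k = n := by omega
      rw [hkn]
      have hfeq : (fun x => W n x * Y x)
          = (fun x => (π n x)⁻¹) * (fun x => ind n x * Y x) := by
        funext x
        simp only [hWdef, Pi.mul_apply]
        rw [show Ico n (n+1) = {n} by rw [Nat.Ico_succ_singleton]]
        simp only [Finset.prod_singleton]
        ring
      have hg : Integrable (fun x => ind n x * Y x) P := by
        apply hInt _ CY ((hindF n le_rfl).mul hY_meas)
        filter_upwards with x
        rw [Pi.mul_apply, abs_mul]
        calc |ind n x| * |Y x| ≤ 1 * CY :=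
              mul_le_mul (hind_abs n x) (hY_bd x) (abs_nonneg _) zero_le_one
          _ = CY := one_mul CY
      have hfg : Integrable ((fun x => (π n x)⁻¹) * (fun x => ind n x * Y x)) P := by
        rw [← hfeq]; exact hWY_int n
      have hf : StronglyMeasurable[G n] (fun x => (π n x)⁻¹) :=
        ((hπ_meas n le_rfl).inv).stronglyMeasurable
      rw [hfeq]
      refine (condExp_mul_of_stronglyMeasurable_left hf hfg hg).trans ?_
      filter_upwards [hμ_n, hπ_bd n le_rfl] with x h1 h2
      simp only [Pi.mul_apply]
      rw [h1, ← mul_assoc, inv_mul_cancel₀ (ne_of_gt (lt_of_lt_of_le hε h2.1)), one_mul]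
    | succ d IH =>
      intro k hk
      have hkn : k < n := by omega
      have hk1 : k + 1 ≤ n := hkn
      have hIH := IH (k+1) (by omega)
      -- split off the first factor
      have hfeq : (fun x => W k x * Y x)
          = (fun x => ind k x / π k x) * (fun x => W (k+1) x * Y x) := by
        funext x
        simp only [hWdef, Pi.mul_apply]
        rw [Finset.prod_eq_prod_Ico_succ_bot (by omega : k < n+1)]
        ring
      have h1 : P[fun x => W k x * Y x | G k]
          =ᵐ[P] P[P[fun x => W k x * Y x | G (k+1)] | G k] :=
        (condExp_condExp_of_le (hG_mono (Nat.le_succ k)) (hG_le (k+1))).symm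
      have hf : StronglyMeasurable[G (k+1)] (fun x => ind k x / π k x) := by
        have hi : Measurable[G (k+1)] (ind k) := measurable_const.indicator (hA k hkn.le)
        have hp : Measurable[G (k+1)] (π k) :=
          (hπ_meas k hkn.le).mono (hG_mono (Nat.le_succ k)) le_rfl
        exact (hi.div hp).stronglyMeasurable
      have hfg : Integrable ((fun x => ind k x / π k x) * (fun x => W (k+1) x * Y x)) P := by
        rw [← hfeq]; exact hWY_int k
      have h2 : P[fun x => W k x * Y x | G (k+1)]
          =ᵐ[P] fun x => (ind k x / π k x) * μ (k+1) x := by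
        rw [hfeq]
        refine (condExp_mul_of_stronglyMeasurable_left hf hfg (hWY_int (k+1))).trans ?_
        filter_upwards [hIH] with x hx
        simp only [Pi.mul_apply]
        rw [hx]
      have h3 : P[fun x => (ind k x / π k x) * μ (k+1) x | G k] =ᵐ[P] μ k := by
        have hfeq2 : (fun x => (ind k x / π k x) * μ (k+1) x)
            = (fun x => (π k x)⁻¹) * (fun x => ind k x * μ (k+1) x) := by
          funext x; simp only [Pi.mul_apply]; ring
        have hg2 : Integrable (fun x => ind k x * μ (k+1) x) P := by
          apply hInt _ Cμ ((hindF k hkn.le).mul (hμF (k+1) hk1))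
          filter_upwards with x
          rw [Pi.mul_apply, abs_mul]
          calc |ind k x| * |μ (k+1) x| ≤ 1 * Cμ :=
                mul_le_mul (hind_abs k x) (hμ_bd (k+1) hk1 x) (abs_nonneg _) zero_le_one
            _ = Cμ := one_mul Cμ
        have hfg2 : Integrable ((fun x => (π k x)⁻¹) * (fun x => ind k x * μ (k+1) x)) P := by
          apply hInt _ (ε⁻¹ * Cμ)
            (((hπF k hkn.le).inv).mul ((hindF k hkn.le).mul (hμF (k+1) hk1)))
          filter_upwards [hbd_all] with x hx
          have hπx := hx k hkn.le
          simp only [Pi.mul_apply, Pi.inv_apply]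
          rw [abs_mul]
          apply mul_le_mul _ _ (abs_nonneg _) (le_trans zero_le_one hεinv)
          · rw [abs_inv, abs_of_pos (lt_of_lt_of_le hε hπx.1)]
            exact inv_anti₀ hε hπx.1
          · rw [abs_mul]
            calc |ind k x| * |μ (k+1) x| ≤ 1 * Cμ :=
                  mul_le_mul (hind_abs k x) (hμ_bd (k+1) hk1 x) (abs_nonneg _) zero_le_one
              _ = Cμ := one_mul Cμ
        have hfG : StronglyMeasurable[G k] (fun x => (π k x)⁻¹) :=
          ((hπ_meas k hkn.le).inv).stronglyMeasurable
        rw [hfeq2]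
        refine (condExp_mul_of_stronglyMeasurable_left hfG hfg2 hg2).trans ?_
        filter_upwards [hμ_rec k hkn, hπ_bd k hkn.le] with x hr hb
        simp only [Pi.mul_apply]
        rw [hr, ← mul_assoc, inv_mul_cancel₀ (ne_of_gt (lt_of_lt_of_le hε hb.1)), one_mul]
      exact h1.trans ((condExp_congr_ae h2).trans h3)
  have hfinal := key n 0 (Nat.zero_add n)
  refine Filter.EventuallyEq.trans ?_ hfinal
  apply condExp_congr_ae
  filter_upwards with x
  simp only [hWdef, hind, range_eq_Ico]
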